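/- Let F be any field, n ≥ 1 with (n, char F) ≠ (1, 2). Then the minimum dimension of a faithful finite-dimensional h(n)-module is n + 2. -/

import Mathlib

open Module LinearMap

namespace HeisenAux

variable (F : Type) [Field F] (n : ℕ)

noncomputable def bH : Basis (Fin n ⊕ Fin n) F ((Fin n ⊕ Fin n) → F) := Pi.basisFun F _

noncomputable def tau : ((Fin n ⊕ Fin n) → F) →ₗ[F] ((Fin n ⊕ Fin n) → F) :=
  (bH F n).constr F (Sum.elim (fun i => bH F n (.inr i)) (fun i => -(bH F n (.inl i))))

lemma tau_basis_inl (i : Fin n) : tau F n (bH F n (.inl i)) = bH F n (.inr i) := by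
  simp [tau, Basis.constr_basis]

lemma tau_basis_inr (i : Fin n) : tau F n (bH F n (.inr i)) = -(bH F n (.inl i)) := by
  simp [tau, Basis.constr_basis]

lemma tau_tau (u : (Fin n ⊕ Fin n) → F) : tau F n (tau F n u) = -u := by
  have : (tau F n).comp (tau F n) = -LinearMap.id := by
    apply (bH F n).ext; intro k
    cases k with
    | inl i => simp [tau_basis_inl, tau_basis_inr]
    | inr i => simp [tau_basis_inl, tau_basis_inr]
  simpa using congrArg (fun f => f u) (congrArg DFunLike.coe this)

lemma tau_surj : Function.Surjective (tau F n) := by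
  intro w
  exact ⟨-(tau F n w), by rw [map_neg, tau_tau]; simp⟩

noncomputable def omg : ((Fin n ⊕ Fin n) → F) →ₗ[F] Module.Dual F ((Fin n ⊕ Fin n) → F) :=
  ((bH F n).toDualEquiv.toLinearMap).comp (tau F n)

lemma omg_surj : Function.Surjective (omg F n) :=
  (bH F n).toDualEquiv.surjective.comp (tau_surj F n)

lemma omg_basis_inl_inr (i j : Fin n) :
    omg F n (bH F n (.inl i)) (bH F n (.inr j)) = if i = j then 1 else 0 := by
  simp only [omg, LinearMap.comp_apply, tau_basis_inl, LinearEquiv.coe_toLinearMap,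
    Basis.toDualEquiv_apply, Basis.toDual_apply]
  simp [Sum.inr.injEq]

lemma omg_basis_inl_inl (i j : Fin n) :
    omg F n (bH F n (.inl i)) (bH F n (.inl j)) = 0 := by
  simp only [omg, LinearMap.comp_apply, tau_basis_inl, LinearEquiv.coe_toLinearMap,
    Basis.toDualEquiv_apply, Basis.toDual_apply]
  simp

lemma omg_basis_inr_inl (i j : Fin n) :
    omg F n (bH F n (.inr i)) (bH F n (.inl j)) = if i = j then -1 else 0 := by
  simp only [omg, LinearMap.comp_apply, tau_basis_inr, LinearEquiv.coe_toLinearMap,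
    map_neg, Basis.toDualEquiv_apply, Basis.toDual_apply]
  simp only [LinearMap.neg_apply, Basis.toDual_apply, Sum.inl.injEq]
  split_ifs <;> simp

lemma omg_basis_inr_inr (i j : Fin n) :
    omg F n (bH F n (.inr i)) (bH F n (.inr j)) = 0 := by
  simp only [omg, LinearMap.comp_apply, tau_basis_inr, LinearEquiv.coe_toLinearMap,
    map_neg, LinearMap.neg_apply, Basis.toDualEquiv_apply, Basis.toDual_apply]
  simp

lemma omg_skew (u w : (Fin n ⊕ Fin n) → F) : omg F n u w = -omg F n w u := by
  have : (LinearMap.mk₂ F (fun u w => omg F n u w + omg F n w u)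
      (by intros; simp [add_add_add_comm])
      (by intros c m n'; simp [smul_add, mul_add])
      (by intros; simp [add_add_add_comm])
      (by intros c m n'; simp [smul_add, mul_add])) = (0 : _ →ₗ[F] _ →ₗ[F] F) := by
    apply LinearMap.ext_basis (bH F n) (bH F n)
    intro k l
    cases k with
    | inl i =>
      cases l with
      | inl j => simp [LinearMap.mk₂_apply, omg_basis_inl_inl]
      | inr j =>
        simp only [LinearMap.mk₂_apply, omg_basis_inl_inr, omg_basis_inr_inl, eq_comm,
          LinearMap.zero_apply]
        split_ifs <;> ring
    | inr i =>
      cases l with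
      | inl j =>
        simp only [LinearMap.mk₂_apply, omg_basis_inl_inr, omg_basis_inr_inl, eq_comm,
          LinearMap.zero_apply]
        split_ifs <;> ring
      | inr j => simp [LinearMap.mk₂_apply, omg_basis_inr_inr]
  have h := DFunLike.congr_fun (DFunLike.congr_fun this u) w
  simp only [LinearMap.mk₂_apply, LinearMap.zero_apply] at h
  exact eq_neg_of_add_eq_zero_left h
  
end HeisenAux

open HeisenAux

lemma end_scalar_of_forall_mem_span {F : Type} [Field F] {V : Type} [AddCommGroup V]
    [Module F V] (A : Module.End F V)
    (h : ∀ v : V, A v ∈ Submodule.span F {v}) :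
    ∃ c : F, A = c • (1 : Module.End F V) := by
  by_cases hV : ∀ v : V, v = 0
  · exact ⟨0, by ext w; rw [hV w]; simp⟩
  push_neg at hV
  obtain ⟨v₀, hv₀⟩ := hV
  obtain ⟨c, hc⟩ := Submodule.mem_span_singleton.mp (h v₀)
  refine ⟨c, ?_⟩
  ext w
  simp only [LinearMap.smul_apply, Module.End.one_apply]
  obtain ⟨μ, hμ⟩ := Submodule.mem_span_singleton.mp (h w)
  by_cases hw : w ∈ Submodule.span F {v₀}
  · obtain ⟨t, rfl⟩ := Submodule.mem_span_singleton.mp hw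
    rw [map_smul, ← hc, smul_smul, smul_smul, mul_comm]
  · obtain ⟨ν, hν⟩ := Submodule.mem_span_singleton.mp (h (v₀ + w))
    have h1 : ν • v₀ + ν • w = c • v₀ + μ • w := by
      rw [← smul_add, hν, map_add, ← hc, ← hμ]
    have hνμ : ν = μ := by
      by_contra hne
      apply hw
      have h2 : (ν - μ) • w = (c - ν) • v₀ := by
        rw [sub_smul, sub_smul]
        rw [← sub_eq_zero] at h1 ⊢
        rw [← h1]; abel
      have : w = ((ν - μ)⁻¹ * (c - ν)) • v₀ := by
        rw [mul_smul, ← h2, smul_smul, inv_mul_cancel₀ (sub_ne_zero.mpr hne), one_smul]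
      exact this ▸ Submodule.smul_mem _ _ (Submodule.mem_span_singleton_self v₀)
    have hμc : μ = c := by
      rw [hνμ] at h1
      have h3 : (μ - c) • v₀ = 0 := by
        rw [sub_smul, sub_eq_zero]
        exact add_right_cancel h1
      rcases smul_eq_zero.mp h3 with h4 | h4
      · exact sub_eq_zero.mp h4
      · exact absurd h4 hv₀
    rw [← hμ, hμc]

set_option maxHeartbeats 1000000 in
theorem core_lower (F : Type) [Field F] {n : ℕ} (hn : 1 ≤ n)
    (V : Type) [AddCommGroup V] [Module F V] [FiniteDimensional F V]
    (A : Module.End F V) (B C : Fin n → Module.End F V)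
    (hA : A ≠ 0)
    (hAB : ∀ i, A * B i = B i * A) (hAC : ∀ i, A * C i = C i * A)
    (hBB : ∀ i j, B i * B j = B j * B i) (hCC : ∀ i j, C i * C j = C j * C i)
    (hBC : ∀ i j, B i * C j - C j * B i = if i = j then A else 0)
    (hexc : ¬(n = 1 ∧ ringChar F = 2)) :
    n + 2 ≤ Module.finrank F V := by
  by_contra hcon
  push_neg at hcon
  have hd : Module.finrank F V ≤ n + 1 := by omega
  set Rho : ((Fin n ⊕ Fin n) → F) →ₗ[F] Module.End F V :=
    (bH F n).constr F (Sum.elim B C) with hRhoDef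
  have hRho_inl : ∀ i, Rho (bH F n (.inl i)) = B i := by
    intro i; rw [hRhoDef, Basis.constr_basis]; rfl
  have hRho_inr : ∀ i, Rho (bH F n (.inr i)) = C i := by
    intro i; rw [hRhoDef, Basis.constr_basis]; rfl
  have commKey : ∀ u u', Rho u * Rho u' - Rho u' * Rho u = omg F n u u' • A := by
    have hh : (LinearMap.mk₂ F (fun u u' => Rho u * Rho u' - Rho u' * Rho u)
        (by intros; simp only [map_add, add_mul, mul_add]; abel)
        (by intros; simp only [map_smul, smul_mul_assoc, mul_smul_comm, ← smul_sub])
        (by intros; simp only [map_add, add_mul, mul_add]; abel)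
        (by intros; simp only [map_smul, smul_mul_assoc, mul_smul_comm, ← smul_sub]))
        = (LinearMap.mk₂ F (fun u u' => omg F n u u' • A)
        (by intros; simp only [map_add, LinearMap.add_apply, add_smul])
        (by intros; simp only [map_smul, LinearMap.smul_apply, smul_eq_mul, mul_smul])
        (by intros; simp only [map_add, add_smul])
        (by intros; simp only [map_smul, smul_eq_mul, mul_smul])) := by
      apply LinearMap.ext_basis (bH F n) (bH F n)
      intro k l
      cases k with
      | inl i =>
        cases l with
        | inl j =>
          simp only [LinearMap.mk₂_apply, hRho_inl, omg_basis_inl_inl, zero_smul, hBB i j,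
            sub_self]
        | inr j =>
          simp only [LinearMap.mk₂_apply, hRho_inl, hRho_inr, omg_basis_inl_inr, hBC i j]
          split_ifs <;> simp
      | inr i =>
        cases l with
        | inl j =>
          simp only [LinearMap.mk₂_apply, hRho_inl, hRho_inr, omg_basis_inr_inl]
          by_cases hij : i = j
          · subst hij
            rw [← neg_sub, hBC i i, if_pos rfl, if_pos rfl]
            simp
          · rw [← neg_sub, hBC j i, if_neg (fun h => hij h.symm), if_neg hij]
            simp
        | inr j =>
          simp only [LinearMap.mk₂_apply, hRho_inr, omg_basis_inr_inr, zero_smul, hCC i j,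
            sub_self]
    intro u u'
    exact DFunLike.congr_fun (DFunLike.congr_fun hh u) u'
  have hAcomm : ∀ u, A * Rho u = Rho u * A := by
    have hh : (LinearMap.mulLeft F A).comp Rho = (LinearMap.mulRight F A).comp Rho := by
      apply (bH F n).ext; intro k
      cases k with
      | inl i => simp [hRho_inl, LinearMap.mulLeft_apply, LinearMap.mulRight_apply, hAB i]
      | inr i => simp [hRho_inr, LinearMap.mulLeft_apply, LinearMap.mulRight_apply, hAC i]
    intro u
    simpa [LinearMap.mulLeft_apply, LinearMap.mulRight_apply] using DFunLike.congr_fun hh u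
  have hRA : ∀ (u₀) (w : V), Rho u₀ (A w) = A (Rho u₀ w) := by
    intro u₀ w
    calc Rho u₀ (A w) = (Rho u₀ * A) w := rfl
      _ = (A * Rho u₀) w := by rw [hAcomm]
      _ = A (Rho u₀ w) := rfl
  by_cases hscal : ∀ v : V, A v ∈ Submodule.span F {v}
  case neg =>
    push_neg at hscal
    obtain ⟨v, hv⟩ := hscal
    have hv0 : v ≠ 0 := by rintro rfl; exact hv (by simp)
    have hAv0 : A v ≠ 0 := by
      intro h; exact hv (h ▸ Submodule.zero_mem _)
    have hindep2 : ∀ a b : F, a • v + b • (A v) = 0 → a = 0 ∧ b = 0 := by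
      intro a b hab
      by_cases hb : b = 0
      · subst hb
        rw [zero_smul, add_zero] at hab
        rcases smul_eq_zero.mp hab with h | h
        · exact ⟨h, rfl⟩
        · exact absurd h hv0
      · exfalso
        apply hv
        have : A v = (-(b⁻¹ * a)) • v := by
          have h1 : b • A v = -(a • v) := by
            have h := hab
            rw [add_comm] at h
            exact eq_neg_of_add_eq_zero_left h
          have h2 : A v = b⁻¹ • (b • A v) := by
            rw [smul_smul, inv_mul_cancel₀ hb, one_smul]
          rw [h2, h1, smul_neg, smul_smul, ← neg_smul]
        exact this ▸ Submodule.smul_mem _ _ (Submodule.mem_span_singleton_self v)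
    set T : (((Fin n ⊕ Fin n) → F) × (F × F)) →ₗ[F] V :=
      { toFun := fun p => Rho p.1 v + p.2.1 • v + p.2.2 • (A v)
        map_add' := by
          intro p q
          simp only [Prod.fst_add, Prod.snd_add, map_add, LinearMap.add_apply, add_smul]
          abel
        map_smul' := by
          intro c p
          simp only [Prod.smul_fst, Prod.smul_snd, map_smul, LinearMap.smul_apply,
            smul_eq_mul, RingHom.id_apply, smul_add, smul_smul] } with hTdef
    have hTapp : ∀ p, T p = Rho p.1 v + p.2.1 • v + p.2.2 • (A v) := fun p => rfl
    set K := LinearMap.ker T with hKdef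
    set jmap : K →ₗ[F] ((Fin n ⊕ Fin n) → F) :=
      (LinearMap.fst F _ _).comp K.subtype with hjdef
    have hjinj : Function.Injective jmap := by
      rw [← LinearMap.ker_eq_bot]
      rw [eq_bot_iff]
      rintro ⟨x, hx⟩ hker
      have hx1 : x.1 = 0 := hker
      have hTx : T x = 0 := hx
      rw [hTapp, hx1, map_zero, LinearMap.zero_apply, zero_add] at hTx
      obtain ⟨h1, h2⟩ := hindep2 _ _ hTx
      have : x = 0 := by
        ext
        · rw [hx1]; rfl
        · exact h1
        · exact h2
      simp only [Submodule.mem_bot]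
      exact Subtype.ext this
    set LL := K.map (LinearMap.fst F ((Fin n ⊕ Fin n) → F) (F × F)) with hLLdef
    have hrange : LinearMap.range jmap = LL := by
      rw [hjdef, LinearMap.range_comp, Submodule.range_subtype]
    have hKL : Module.finrank F K = Module.finrank F LL := by
      rw [← hrange, ← LinearMap.finrank_range_of_inj hjinj]
    have hiso : ∀ u ∈ LL, ∀ u' ∈ LL, omg F n u u' = 0 := by
      rintro _ ⟨⟨u, a, b⟩, hk, rfl⟩ _ ⟨⟨u', a', b'⟩, hk', rfl⟩
      have hk0 : T (u, a, b) = 0 := hk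
      have hk0' : T (u', a', b') = 0 := hk'
      rw [hTapp] at hk0 hk0'
      simp only at hk0 hk0'
      have h1 : Rho u v = -(a • v + b • A v) := by
        rw [add_assoc] at hk0
        exact eq_neg_of_add_eq_zero_left hk0
      have h1' : Rho u' v = -(a' • v + b' • A v) := by
        rw [add_assoc] at hk0'
        exact eq_neg_of_add_eq_zero_left hk0'
      have h3 := DFunLike.congr_fun (commKey u u') v
      simp only [LinearMap.sub_apply, Module.End.mul_apply, LinearMap.smul_apply] at h3
      simp only [h1', h1, map_neg, map_add, map_smul, hRA] at h3
      have h4 : omg F n u u' • A v = 0 := by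
        rw [← h3]
        module
      rcases smul_eq_zero.mp h4 with h | h
      · exact h
      · exact absurd h hAv0
    have hLLle : Module.finrank F LL ≤ n := by
      set ψ : ((Fin n ⊕ Fin n) → F) →ₗ[F] Module.Dual F LL :=
        (LL.subtype.dualMap).comp (omg F n) with hψdef
      have hψsurj : Function.Surjective ψ :=
        (LinearMap.dualMap_surjective_of_injective (Submodule.injective_subtype LL)).comp
          (omg_surj F n)
      have hLLker : LL ≤ LinearMap.ker ψ := by
        intro u hu
        rw [LinearMap.mem_ker]
        ext ⟨x, hx⟩
        simp only [hψdef, LinearMap.comp_apply, LinearMap.dualMap_apply, LinearMap.zero_apply,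
          Submodule.coe_subtype]
        exact hiso u hu x hx
      have h5 := LinearMap.finrank_range_add_finrank_ker ψ
      have h6 : LinearMap.range ψ = ⊤ := LinearMap.range_eq_top.mpr hψsurj
      rw [h6] at h5
      have h7 : Module.finrank F (⊤ : Submodule F (Module.Dual F LL))
          = Module.finrank F LL := by
        rw [finrank_top, Subspace.dual_finrank_eq]
      have h8 : Module.finrank F LL ≤ Module.finrank F (LinearMap.ker ψ) :=
        Submodule.finrank_mono hLLker
      have h9 : Module.finrank F ((Fin n ⊕ Fin n) → F) = 2 * n := by
        rw [Module.finrank_pi]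
        simp [Fintype.card_sum]
        ring
      omega
    have h10 := LinearMap.finrank_range_add_finrank_ker T
    have h11 : Module.finrank F (((Fin n ⊕ Fin n) → F) × (F × F)) = 2 * n + 2 := by
      rw [Module.finrank_prod, Module.finrank_prod, Module.finrank_pi, Module.finrank_self]
      simp [Fintype.card_sum]
      ring
    have h12 : Module.finrank F (LinearMap.range T) ≤ Module.finrank F V :=
      Submodule.finrank_le _
    rw [h11] at h10
    rw [← hKdef] at h10
    omega
  case pos =>
    obtain ⟨lam, hlam⟩ := end_scalar_of_forall_mem_span A hscal
    have hlam0 : lam ≠ 0 := by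
      rintro rfl; rw [zero_smul] at hlam; exact hA hlam
    have hAapp : ∀ w : V, A w = lam • w := by
      intro w; rw [hlam]; simp
    have hVne : ∃ v : V, v ≠ 0 := by
      by_contra h
      push_neg at h
      apply hA
      ext w
      rw [h w]; simp
    obtain ⟨v, hv0⟩ := hVne
    set T₂ : (((Fin n ⊕ Fin n) → F) × F) →ₗ[F] V :=
      { toFun := fun p => Rho p.1 v + p.2 • v
        map_add' := by
          intro p q
          simp only [Prod.fst_add, Prod.snd_add, map_add, LinearMap.add_apply, add_smul]
          abel
        map_smul' := by
          intro c p
          simp only [Prod.smul_fst, Prod.smul_snd, map_smul, LinearMap.smul_apply,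
            smul_eq_mul, RingHom.id_apply, smul_add, smul_smul] } with hT₂def
    have hT₂app : ∀ p, T₂ p = Rho p.1 v + p.2 • v := fun p => rfl
    set K₂ := LinearMap.ker T₂ with hK₂def
    have hK₂rank : n ≤ Module.finrank F K₂ := by
      have h10 := LinearMap.finrank_range_add_finrank_ker T₂
      have h11 : Module.finrank F (((Fin n ⊕ Fin n) → F) × F) = 2 * n + 1 := by
        rw [Module.finrank_prod, Module.finrank_pi, Module.finrank_self]
        simp [Fintype.card_sum]
        ring
      have h12 : Module.finrank F (LinearMap.range T₂) ≤ Module.finrank F V :=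
        Submodule.finrank_le _
      rw [h11, ← hK₂def] at h10
      omega
    obtain ⟨f, hf⟩ := exists_linearIndependent_of_le_finrank (R := F) (M := K₂) hK₂rank
    set p : Fin n → (((Fin n ⊕ Fin n) → F) × F) := fun i => (f i).val with hpdef
    have hp_mem : ∀ i, p i ∈ K₂ := fun i => (f i).2
    have hpind : LinearIndependent F p := hf.map' K₂.subtype (Submodule.ker_subtype _)
    set u : Fin n → ((Fin n ⊕ Fin n) → F) := fun i => (p i).1 with hudef
    set a : Fin n → F := fun i => (p i).2 with hadef
    have hTu : ∀ i, Rho (u i) v + a i • v = 0 := by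
      intro i
      have := hp_mem i
      rw [hK₂def, LinearMap.mem_ker, hT₂app] at this
      exact this
    have huind : LinearIndependent F u := by
      have hdisj : Disjoint (Submodule.span F (Set.range p))
          (LinearMap.ker (LinearMap.fst F ((Fin n ⊕ Fin n) → F) F)) := by
        have hsp : Submodule.span F (Set.range p) ≤ K₂ :=
          Submodule.span_le.mpr (by rintro _ ⟨i, rfl⟩; exact hp_mem i)
        have hbot : K₂ ⊓ LinearMap.ker (LinearMap.fst F ((Fin n ⊕ Fin n) → F) F) = ⊥ := by
          rw [eq_bot_iff]
          rintro x ⟨hx1, hx2⟩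
          have hxf : x.1 = 0 := hx2
          have hxT : T₂ x = 0 := hx1
          rw [hT₂app, hxf, map_zero, LinearMap.zero_apply, zero_add] at hxT
          rcases smul_eq_zero.mp hxT with h | h
          · have : x = 0 := Prod.ext hxf h
            simp [this]
          · exact absurd h hv0
        exact Disjoint.mono_left hsp (disjoint_iff.mpr hbot)
      have hcomp : u = ⇑(LinearMap.fst F ((Fin n ⊕ Fin n) → F) F) ∘ p := by
        funext i; rfl
      rw [hcomp]
      exact hpind.map hdisj
    -- construct the dual family u'
    set S : (Fin n → F) →ₗ[F] ((Fin n ⊕ Fin n) → F) := (Pi.basisFun F (Fin n)).constr F u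
      with hSdef
    have hSapp : ∀ c, S c = ∑ i, c i • u i := by
      intro c
      rw [hSdef, Basis.constr_apply_fintype]
      simp [Basis.equivFun_apply, Pi.basisFun_repr]
    have hSsingle : ∀ i, S (Pi.single i 1) = u i := by
      intro i
      rw [hSapp]
      rw [Finset.sum_eq_single i]
      · simp
      · intro b _ hb
        rw [Pi.single_apply, if_neg hb, zero_smul]
      · intro hh
        exact absurd (Finset.mem_univ i) hh
    have hSinj : Function.Injective S := by
      rw [← LinearMap.ker_eq_bot, eq_bot_iff]
      intro c hc
      have hc0 : S c = 0 := hc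
      rw [hSapp] at hc0
      have := Fintype.linearIndependent_iff.mp huind c hc0
      simp only [Submodule.mem_bot]
      funext i
      exact this i
    have hSd := LinearMap.dualMap_surjective_of_injective hSinj
    have hgex : ∀ j : Fin n, ∃ g : Module.Dual F ((Fin n ⊕ Fin n) → F),
        S.dualMap g = -(LinearMap.proj j) := fun j => hSd _
    choose g hg using hgex
    have homsurj := omg_surj F n
    have hu'ex : ∀ j : Fin n, ∃ w, omg F n w = g j := fun j => homsurj (g j)
    choose u' hu' using hu'ex
    have hdual : ∀ i j, omg F n (u i) (u' j) = if i = j then 1 else 0 := by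
      intro i j
      rw [omg_skew, hu']
      have h1 : g j (u i) = -(if j = i then (1:F) else 0) := by
        have h2 := DFunLike.congr_fun (hg j) (Pi.single i 1)
        rw [LinearMap.dualMap_apply, hSsingle] at h2
        simpa [Pi.single_apply] using h2
      rw [h1]
      split_ifs with h h' h'
      · simp
      · exact absurd h.symm h'
      · exact absurd h'.symm h
      · simp
    set N : Fin n → Module.End F V := fun i => Rho (u i) + a i • 1 with hNdef
    set M' : Fin n → Module.End F V := fun j => Rho (u' j) with hM'def
    have hNv : ∀ i, N i v = 0 := by
      intro i
      simp only [hNdef, LinearMap.add_apply, LinearMap.smul_apply, Module.End.one_apply]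
      exact hTu i
    have hNM : ∀ i j, N i * M' j - M' j * N i = (if i = j then lam else 0) • 1 := by
      intro i j
      have h := commKey (u i) (u' j)
      rw [hdual] at h
      have expand : N i * M' j - M' j * N i
          = Rho (u i) * Rho (u' j) - Rho (u' j) * Rho (u i) := by
        simp only [hNdef, hM'def, add_mul, mul_add, smul_mul_assoc, mul_smul_comm, one_mul,
          mul_one]
        abel
      rw [expand, h, hlam]
      split_ifs <;> simp [smul_smul]
    set vv : Fin n → V := fun j => M' j v with hvvdef
    have hNvv : ∀ i j, N i (vv j) = (if i = j then lam else 0) • v := by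
      intro i j
      have h := DFunLike.congr_fun (hNM i j) v
      simp only [LinearMap.sub_apply, Module.End.mul_apply, LinearMap.smul_apply,
        Module.End.one_apply] at h
      rw [hNv i, map_zero, sub_zero] at h
      exact h
    set FF : (Unit ⊕ Fin n) → V := Sum.elim (fun _ => v) vv with hFFdef
    have hFFind : LinearIndependent F FF := by
      rw [Fintype.linearIndependent_iff]
      intro gg hgg
      have hgg' : gg (Sum.inl ()) • v + ∑ j, gg (Sum.inr j) • vv j = 0 := by
        rw [← hgg, Fintype.sum_sum_type]
        simp [hFFdef]
      have hcoef : ∀ i, gg (Sum.inr i) = 0 := by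
        intro i
        have h0 := congrArg (fun w => N i w) hgg'
        simp only [map_add, map_sum, map_smul, hNv, hNvv, smul_zero, zero_add, map_zero] at h0
        rw [Finset.sum_eq_single i] at h0
        · rw [if_pos rfl] at h0
          rcases smul_eq_zero.mp h0 with h | h
          · exact h
          · rcases smul_eq_zero.mp h with h' | h'
            · exact absurd h' hlam0
            · exact absurd h' hv0
        · intro b _ hb
          rw [if_neg (fun hh => hb hh.symm)]
          simp
        · intro hh
          exact absurd (Finset.mem_univ i) hh
      have hinl : gg (Sum.inl ()) = 0 := by
        have : gg (Sum.inl ()) • v = 0 := by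
          rw [← hgg']
          rw [Finset.sum_eq_zero (fun j _ => by rw [hcoef j, zero_smul])]
          abel
        rcases smul_eq_zero.mp this with h | h
        · exact h
        · exact absurd h hv0
      intro k
      rcases k with ⟨⟩ | j
      · exact hinl
      · exact hcoef j
    have hcard : n + 1 ≤ Module.finrank F V := by
      have := hFFind.fintype_card_le_finrank
      simp [Fintype.card_sum] at this
      omega
    have heq : Module.finrank F V = n + 1 := le_antisymm hd hcard
    have hcardeq : Fintype.card (Unit ⊕ Fin n) = Module.finrank F V := by
      simp [Fintype.card_sum, heq]
      omega
    set bV := basisOfLinearIndependentOfCardEqFinrank hFFind hcardeq with hbVdef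
    have hbVcoe : ⇑bV = FF := coe_basisOfLinearIndependentOfCardEqFinrank hFFind hcardeq
    have hspanFF : Submodule.span F (Set.range FF) = ⊤ := by
      rw [← hbVcoe]
      exact bV.span_eq
    have hNspan : ∀ i (w : V), N i w ∈ Submodule.span F {v} := by
      intro i w
      have hr : LinearMap.range (N i) ≤ Submodule.span F {v} := by
        rw [LinearMap.range_eq_map, ← hspanFF, Submodule.map_span]
        refine Submodule.span_le.mpr ?_
        rintro _ ⟨_, ⟨k, rfl⟩, rfl⟩
        rcases k with ⟨⟩ | j
        · simp only [hFFdef, Sum.elim_inl, hNv]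
          exact Submodule.zero_mem _
        · simp only [hFFdef, Sum.elim_inr, hNvv]
          exact Submodule.smul_mem _ _ (Submodule.mem_span_singleton_self v)
      exact hr (LinearMap.mem_range_self _ w)
    -- final contradiction
    have hkey : ∀ (i j : Fin n), ∃ c : F,
        c • v - lam • vv j = (if i = j then lam else 0) • vv i := by
      intro i j
      have h := DFunLike.congr_fun (hNM i j) (vv i)
      simp only [LinearMap.sub_apply, Module.End.mul_apply, LinearMap.smul_apply,
        Module.End.one_apply] at h
      rw [hNvv i i, if_pos rfl] at h
      have hMv : M' j (lam • v) = lam • vv j := by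
        rw [map_smul]
      rw [hMv] at h
      obtain ⟨c, hc⟩ := Submodule.mem_span_singleton.mp (hNspan i (M' j (vv i)))
      exact ⟨c, by rw [hc]; exact h⟩
    set i0 : Fin n := ⟨0, by omega⟩ with hi0
    by_cases hn2 : 2 ≤ n
    · set j0 : Fin n := ⟨1, by omega⟩ with hj0
      have hij : i0 ≠ j0 := by
        simp [hi0, hj0, Fin.ext_iff]
      obtain ⟨c, hc⟩ := hkey i0 j0
      rw [if_neg hij, zero_smul] at hc
      -- c • v + (-lam) • vv j0 = 0
      have hrel : (Sum.elim (fun _ : Unit => c) (fun j => if j = j0 then -lam else 0) : (Unit ⊕ Fin n) → F) = 0 → False := by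
        intro habs
        have := congrFun habs (Sum.inr j0)
        simp only [Sum.elim_inr, if_pos rfl, Pi.zero_apply] at this
        exact hlam0 (neg_eq_zero.mp this)
      apply hrel
      funext k
      have huse := Fintype.linearIndependent_iff.mp hFFind
        (Sum.elim (fun _ : Unit => c) (fun j => if j = j0 then -lam else 0)) ?_ k
      · exact huse
      · rw [Fintype.sum_sum_type]
        simp only [Sum.elim_inl, Sum.elim_inr, hFFdef]
        rw [Finset.sum_eq_single j0]
        · simp only [if_pos rfl, eq_self_iff_true, if_true]
          rw [show (∑ _x : Unit, c • v) = c • v by simp]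
          have heq2 : c • v + (-lam) • vv j0 = c • v - lam • vv j0 := by module
          rw [heq2]
          exact hc
        · intro b _ hb
          rw [if_neg hb, zero_smul]
        · intro hh
          exact absurd (Finset.mem_univ j0) hh
    · have hn1 : n = 1 := by omega
      obtain ⟨c, hc⟩ := hkey i0 i0
      rw [if_pos rfl] at hc
      -- c • v - lam • vv i0 = lam • vv i0, so c • v - (2*lam) • vv i0 = 0
      have hc2 : c • v + (-(2 * lam)) • vv i0 = 0 := by
        have hc' := sub_eq_iff_eq_add.mp hc
        rw [hc']
        module
      have hrel := Fintype.linearIndependent_iff.mp hFFind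
        (Sum.elim (fun _ : Unit => c) (fun j => if j = i0 then -(2*lam) else 0)) ?_ (Sum.inr i0)
      · simp only [Sum.elim_inr, if_pos rfl] at hrel
        have h2lam : (2 : F) * lam = 0 := neg_eq_zero.mp hrel
        have h2 : (2 : F) = 0 := by
          rcases mul_eq_zero.mp h2lam with h | h
          · exact h
          · exact absurd h hlam0
        have hchar : ringChar F = 2 := by
          have h2' : ((2 : ℕ) : F) = 0 := by exact_mod_cast h2
          exact ((Nat.dvd_prime Nat.prime_two).mp (ringChar.dvd h2')).resolve_left
            CharP.ringChar_ne_one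
        exact hexc ⟨hn1, hchar⟩
      · rw [Fintype.sum_sum_type]
        simp only [Sum.elim_inl, Sum.elim_inr, hFFdef]
        rw [Finset.sum_eq_single i0]
        · simp only [if_pos rfl, eq_self_iff_true, if_true]
          rw [show (∑ _x : Unit, c • v) = c • v by simp]
          exact hc2
        · intro b _ hb
          rw [if_neg hb, zero_smul]
        · intro hh
          exact absurd (Finset.mem_univ i0) hh


namespace HeisenAux

variable (F : Type) [Field F] (n : ℕ)

def zer : Fin (n+2) := ⟨0, by omega⟩
def mid (i : Fin n) : Fin (n+2) := ⟨i.1+1, by omega⟩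
def lst : Fin (n+2) := ⟨n+1, by omega⟩

lemma mid_ne_zer (i : Fin n) : mid n i ≠ zer n := by
  simp [mid, zer, Fin.ext_iff]

lemma mid_ne_lst (i : Fin n) : mid n i ≠ lst n := by
  have := i.2
  simp [mid, lst, Fin.ext_iff]
  omega

lemma lst_ne_zer : lst n ≠ zer n := by
  simp [lst, zer, Fin.ext_iff]

lemma mid_inj {i j : Fin n} (h : i ≠ j) : mid n i ≠ mid n j := by
  simpa [mid, Fin.ext_iff] using fun hh => h (Fin.ext hh)

noncomputable def Mat : (Fin n ⊕ (Fin n ⊕ Unit)) → Matrix (Fin (n+2)) (Fin (n+2)) F :=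
  Sum.elim (fun i => Matrix.single (zer n) (mid n i) 1)
    (Sum.elim (fun i => Matrix.single (mid n i) (lst n) 1)
      (fun _ => Matrix.single (zer n) (lst n) 1))

lemma mat_indep : LinearIndependent F (Mat F n) := by
  classical
  have h1 : LinearIndependent F
      (fun p : (Fin (n+2)) × (Fin (n+2)) => Matrix.single p.1 p.2 (1:F)) := by
    have h2 := (Matrix.stdBasis F (Fin (n+2)) (Fin (n+2))).linearIndependent
    have h3 : ⇑(Matrix.stdBasis F (Fin (n+2)) (Fin (n+2)))
        = fun p : (Fin (n+2)) × (Fin (n+2)) => Matrix.single p.1 p.2 (1:F) := by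
      funext p
      rcases p with ⟨i, j⟩
      exact Matrix.stdBasis_eq_single F i j
    rwa [h3] at h2
  set pos : (Fin n ⊕ (Fin n ⊕ Unit)) → (Fin (n+2)) × (Fin (n+2)) :=
    Sum.elim (fun i => (zer n, mid n i))
      (Sum.elim (fun i => (mid n i, lst n)) (fun _ => (zer n, lst n))) with hposdef
  have hposinj : Function.Injective pos := by
    rintro k l h
    rcases k with i | i | ⟨⟩ <;> rcases l with j | j | ⟨⟩ <;>
      simp [hposdef, Prod.ext_iff, zer, mid, lst, Fin.ext_iff] at h ⊢ <;> omega
  have hMat : Mat F n = (fun p : (Fin (n+2)) × (Fin (n+2)) =>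
      Matrix.single p.1 p.2 (1:F)) ∘ pos := by
    funext k
    rcases k with i | i | ⟨⟩ <;> rfl
  rw [hMat]
  exact h1.comp pos hposinj

end HeisenAux

/-- `X`, `Y`, `z` form a symplectic basis of a Heisenberg Lie algebra `L` of
dimension `2n+1` over `F`: they are a basis of `L`, with brackets
`⁅X i, Y i⁆ = z` and all other brackets of basis vectors zero. -/
structure IsHeisenbergBasis (F : Type*) [Field F] {n : ℕ} {L : Type*}
    [LieRing L] [LieAlgebra F L] (X Y : Fin n → L) (z : L) : Prop where
  indep : LinearIndependent F (Sum.elim X (Sum.elim Y fun _ : Unit => z))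
  span : Submodule.span F (Set.range (Sum.elim X (Sum.elim Y fun _ : Unit => z))) = ⊤
  lie_xy : ∀ i j, ⁅X i, Y j⁆ = if i = j then z else 0
  lie_xx : ∀ i j, ⁅X i, X j⁆ = 0
  lie_yy : ∀ i j, ⁅Y i, Y j⁆ = 0
  lie_xz : ∀ i, ⁅X i, z⁆ = 0
  lie_yz : ∀ i, ⁅Y i, z⁆ = 0

attribute [local instance] LieRing.ofAssociativeRing

set_option maxHeartbeats 1000000 in
theorem heisenberg_minimal_faithful_dim
    (F : Type) [Field F] {n : ℕ} (hn : 1 ≤ n) {L : Type} [LieRing L] [LieAlgebra F L]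
    (X Y : Fin n → L) (z : L) (hH : IsHeisenbergBasis F X Y z)
    (hexc : ¬(n = 1 ∧ ringChar F = 2)) :
    IsLeast {d : ℕ | ∃ (V : Type) (_ : AddCommGroup V) (_ : Module F V)
      (_ : FiniteDimensional F V) (R : L →ₗ⁅F⁆ Module.End F V),
      Function.Injective R ∧ Module.finrank F V = d} (n + 2) := by
  classical
  constructor
  · -- membership : construct the (n+2)-dimensional faithful representation
    set bL : Basis (Fin n ⊕ (Fin n ⊕ Unit)) F L := Basis.mk hH.indep hH.span.ge with hbLdef
    have hbLx : ∀ i, bL (Sum.inl i) = X i := fun i => by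
      rw [hbLdef, Basis.mk_apply]; rfl
    have hbLy : ∀ i, bL (Sum.inr (Sum.inl i)) = Y i := fun i => by
      rw [hbLdef, Basis.mk_apply]; rfl
    have hbLz : bL (Sum.inr (Sum.inr ())) = z := by
      rw [hbLdef, Basis.mk_apply]; rfl
    set M₀ : L →ₗ[F] Matrix (Fin (n+2)) (Fin (n+2)) F := bL.constr F (HeisenAux.Mat F n)
      with hM₀def
    have hM0x : ∀ i, M₀ (X i)
        = Matrix.single (HeisenAux.zer n) (HeisenAux.mid n i) 1 := fun i => by
      rw [← hbLx i, hM₀def, Basis.constr_basis]; rfl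
    have hM0y : ∀ i, M₀ (Y i)
        = Matrix.single (HeisenAux.mid n i) (HeisenAux.lst n) 1 := fun i => by
      rw [← hbLy i, hM₀def, Basis.constr_basis]; rfl
    have hM0z : M₀ z
        = Matrix.single (HeisenAux.zer n) (HeisenAux.lst n) 1 := by
      rw [← hbLz, hM₀def, Basis.constr_basis]; rfl
    have hbrkt : ∀ a b : L, M₀ ⁅a, b⁆ = M₀ a * M₀ b - M₀ b * M₀ a := by
      have hh : (LinearMap.mk₂ F (fun a b : L => M₀ ⁅a, b⁆)
          (by intros; simp only [add_lie, map_add])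
          (by intros; simp only [smul_lie, map_smul])
          (by intros; simp only [lie_add, map_add])
          (by intros; simp only [lie_smul, map_smul]))
          = (LinearMap.mk₂ F (fun a b : L => M₀ a * M₀ b - M₀ b * M₀ a)
          (by intros; simp only [map_add, add_mul, mul_add]; abel)
          (by intros; simp only [map_smul, smul_mul_assoc, mul_smul_comm, ← smul_sub])
          (by intros; simp only [map_add, add_mul, mul_add]; abel)
          (by intros; simp only [map_smul, smul_mul_assoc, mul_smul_comm, ← smul_sub])) := by
        apply LinearMap.ext_basis bL bL
        intro k l
        simp only [LinearMap.mk₂_apply]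
        rcases k with i | i | ⟨⟩ <;> rcases l with j | j | ⟨⟩
        · -- X X
          rw [hbLx, hbLx, hH.lie_xx, map_zero, hM0x, hM0x,
            Matrix.single_mul_single_of_ne 1 (HeisenAux.zer n) (HeisenAux.mid n i) _
              (HeisenAux.mid_ne_zer n i) 1,
            Matrix.single_mul_single_of_ne 1 (HeisenAux.zer n) (HeisenAux.mid n j) _
              (HeisenAux.mid_ne_zer n j) 1, sub_zero]
        · -- X Y
          rw [hbLx, hbLy, hH.lie_xy, hM0x, hM0y,
            Matrix.single_mul_single_of_ne 1 (HeisenAux.mid n j) (HeisenAux.lst n) _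
              (HeisenAux.lst_ne_zer n) 1, sub_zero]
          by_cases hij : i = j
          · subst hij
            rw [if_pos rfl, hM0z, Matrix.single_mul_single_same 1 (HeisenAux.zer n)
              (HeisenAux.mid n i) (HeisenAux.lst n) 1, one_mul]
          · rw [if_neg hij, map_zero,
              Matrix.single_mul_single_of_ne 1 (HeisenAux.zer n) (HeisenAux.mid n i) _
                (HeisenAux.mid_inj n hij) 1]
        · -- X z
          rw [hbLx, hbLz, hH.lie_xz, map_zero, hM0x, hM0z,
            Matrix.single_mul_single_of_ne 1 (HeisenAux.zer n) (HeisenAux.mid n i) _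
              (HeisenAux.mid_ne_zer n i) 1,
            Matrix.single_mul_single_of_ne 1 (HeisenAux.zer n) (HeisenAux.lst n) _
              (HeisenAux.lst_ne_zer n) 1, sub_zero]
        · -- Y X
          rw [hbLy, hbLx, ← lie_skew, hH.lie_xy, map_neg, hM0y, hM0x,
            Matrix.single_mul_single_of_ne 1 (HeisenAux.mid n i) (HeisenAux.lst n) _
              (HeisenAux.lst_ne_zer n) 1]
          by_cases hij : j = i
          · subst hij
            rw [if_pos rfl, hM0z, Matrix.single_mul_single_same 1 (HeisenAux.zer n)
              (HeisenAux.mid n j) (HeisenAux.lst n) 1, one_mul, zero_sub]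
          · rw [if_neg hij, map_zero, neg_zero,
              Matrix.single_mul_single_of_ne 1 (HeisenAux.zer n) (HeisenAux.mid n j) _
                (HeisenAux.mid_inj n hij) 1, zero_sub, neg_zero]
        · -- Y Y
          rw [hbLy, hbLy, hH.lie_yy, map_zero, hM0y, hM0y,
            Matrix.single_mul_single_of_ne 1 (HeisenAux.mid n i) (HeisenAux.lst n) _
              ((HeisenAux.mid_ne_lst n j).symm) 1,
            Matrix.single_mul_single_of_ne 1 (HeisenAux.mid n j) (HeisenAux.lst n) _
              ((HeisenAux.mid_ne_lst n i).symm) 1, sub_zero]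
        · -- Y z
          rw [hbLy, hbLz, hH.lie_yz, map_zero, hM0y, hM0z,
            Matrix.single_mul_single_of_ne 1 (HeisenAux.mid n i) (HeisenAux.lst n) _
              (HeisenAux.lst_ne_zer n) 1,
            Matrix.single_mul_single_of_ne 1 (HeisenAux.zer n) (HeisenAux.lst n) _
              ((HeisenAux.mid_ne_lst n i).symm) 1, sub_zero]
        · -- z X
          rw [hbLz, hbLx, ← lie_skew, hH.lie_xz, neg_zero, map_zero, hM0z, hM0x,
            Matrix.single_mul_single_of_ne 1 (HeisenAux.zer n) (HeisenAux.lst n) _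
              (HeisenAux.lst_ne_zer n) 1,
            Matrix.single_mul_single_of_ne 1 (HeisenAux.zer n) (HeisenAux.mid n j) _
              (HeisenAux.mid_ne_zer n j) 1, sub_zero]
        · -- z Y
          rw [hbLz, hbLy, ← lie_skew, hH.lie_yz, neg_zero, map_zero, hM0z, hM0y,
            Matrix.single_mul_single_of_ne 1 (HeisenAux.zer n) (HeisenAux.lst n) _
              ((HeisenAux.mid_ne_lst n j).symm) 1,
            Matrix.single_mul_single_of_ne 1 (HeisenAux.mid n j) (HeisenAux.lst n) _
              (HeisenAux.lst_ne_zer n) 1, sub_zero]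
        · -- z z
          rw [hbLz, lie_self, map_zero, sub_self]
      intro a b
      exact DFunLike.congr_fun (DFunLike.congr_fun hh a) b
    have hM0inj : Function.Injective M₀ := by
      rw [← LinearMap.ker_eq_bot, eq_bot_iff]
      intro w hw
      have hw0 : M₀ w = 0 := hw
      rw [hM₀def, Basis.constr_apply_fintype] at hw0
      have hall := Fintype.linearIndependent_iff.mp (HeisenAux.mat_indep F n)
        (fun k => bL.equivFun w k) hw0
      have hz0 : bL.equivFun w = 0 := funext hall
      have hw' : w = 0 := bL.equivFun.map_eq_zero_iff.mp hz0
      simp [hw']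
    refine ⟨Fin (n+2) → F, inferInstance, inferInstance, inferInstance,
      { toLinearMap := (Matrix.toLin' :
          Matrix (Fin (n+2)) (Fin (n+2)) F ≃ₗ[F] _).toLinearMap.comp M₀,
        map_lie' := by
          intro a b
          show Matrix.toLin' (M₀ ⁅a, b⁆) = ⁅Matrix.toLin' (M₀ a), Matrix.toLin' (M₀ b)⁆
          rw [hbrkt, map_sub, Ring.lie_def, Matrix.toLin'_mul, Matrix.toLin'_mul,
            Module.End.mul_eq_comp, Module.End.mul_eq_comp] }, ?_, ?_⟩
    · exact (Matrix.toLin'.injective).comp hM0inj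
    · rw [Module.finrank_pi]
      simp
  · -- lower bound
    rintro d ⟨V, _inst1, _inst2, _inst3, R, hinjR, rfl⟩
    have hz : z ≠ 0 := hH.indep.ne_zero (Sum.inr (Sum.inr ()))
    have hA : R z ≠ 0 := by
      intro h
      exact hz (hinjR (h.trans R.map_zero.symm))
    have hlie : ∀ a b : L, R a * R b - R b * R a = R ⁅a, b⁆ := by
      intro a b
      rw [LieHom.map_lie, Ring.lie_def]
    refine core_lower F hn V (R z) (fun i => R (X i)) (fun i => R (Y i)) hA ?_ ?_ ?_ ?_ ?_ hexc
    · intro i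
      have := hlie (X i) z
      rw [hH.lie_xz, map_zero, sub_eq_zero] at this
      exact this.symm
    · intro i
      have := hlie (Y i) z
      rw [hH.lie_yz, map_zero, sub_eq_zero] at this
      exact this.symm
    · intro i j
      have := hlie (X i) (X j)
      rw [hH.lie_xx, map_zero, sub_eq_zero] at this
      exact this
    · intro i j
      have := hlie (Y i) (Y j)
      rw [hH.lie_yy, map_zero, sub_eq_zero] at this
      exact this
    · intro i j
      rw [hlie (X i) (Y j), hH.lie_xy]
      split_ifs <;> simp
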